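/- Let Ω and O be n×n complex matrices with Ω skew-Hermitian (Ω* = −Ω). Then ‖exp(−Ω)·O·exp(Ω) − O‖ ≤ ‖[Ω, O]‖, where ‖·‖ is the operator norm and [A,B] = AB − BA. -/

import Mathlib

open Matrix
open scoped Matrix.Norms.L2Operator

private lemma exp_mem_unitary_of_skew {n : ℕ} (A : Matrix (Fin n) (Fin n) ℂ)
    (hA : star A = -A) : NormedSpace.exp A ∈ unitary (Matrix (Fin n) (Fin n) ℂ) := by
  have hstar : star (NormedSpace.exp A) = NormedSpace.exp (-A) := by
    rw [← hA, NormedSpace.star_exp]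
  constructor
  · rw [hstar, ← Matrix.exp_add_of_commute (-A) A (Commute.neg_left rfl), neg_add_cancel,
      NormedSpace.exp_zero]
  · rw [hstar, ← Matrix.exp_add_of_commute A (-A) (Commute.neg_right rfl), add_neg_cancel,
      NormedSpace.exp_zero]

/-- **Frame-rotation error bound.**  If `Ω` is skew-Hermitian (`Ωᴴ = −Ω`), then in the
operator (spectral) norm, `‖exp(−Ω)·O·exp(Ω) − O‖ ≤ ‖[Ω, O]‖`. -/
theorem norm_conj_exp_sub_le_norm_commutator
    (n : ℕ) (Ω O : Matrix (Fin n) (Fin n) ℂ) (hΩ : Ωᴴ = -Ω) :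
    ‖NormedSpace.exp (-Ω) * O * NormedSpace.exp Ω - O‖ ≤ ‖Ω * O - O * Ω‖ := by
  -- the path of conjugated observables
  have hstar : star Ω = -Ω := hΩ
  set f : ℝ → Matrix (Fin n) (Fin n) ℂ := fun s =>
    NormedSpace.exp (s • (-Ω)) * O * NormedSpace.exp (s • Ω) with hf
  set f' : ℝ → Matrix (Fin n) (Fin n) ℂ := fun s =>
    NormedSpace.exp (s • (-Ω)) * (O * Ω - Ω * O) * NormedSpace.exp (s • Ω) with hf'
  have hexp_eq : (NormedSpace.exp : Matrix (Fin n) (Fin n) ℂ → Matrix (Fin n) (Fin n) ℂ)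
      = NormedSpace.exp := rfl
  have hderiv : ∀ s : ℝ, HasDerivAt f (f' s) s := by
    intro s
    have h1 : HasDerivAt (fun u : ℝ => NormedSpace.exp (u • (-Ω)))
        (NormedSpace.exp (s • (-Ω)) * (-Ω)) s := by
      have := hasDerivAt_exp_smul_const (𝕂 := ℝ) (-Ω : Matrix (Fin n) (Fin n) ℂ) s
      simpa [hexp_eq] using this
    have h2 : HasDerivAt (fun u : ℝ => NormedSpace.exp (u • Ω))
        (NormedSpace.exp (s • Ω) * Ω) s := by
      have := hasDerivAt_exp_smul_const (𝕂 := ℝ) (Ω : Matrix (Fin n) (Fin n) ℂ) s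
      simpa [hexp_eq] using this
    have h1' : HasDerivAt (fun u : ℝ => NormedSpace.exp (u • (-Ω)) * O)
        (NormedSpace.exp (s • (-Ω)) * (-Ω) * O) s := h1.mul_const O
    have h3 := h1'.mul h2
    convert h3 using 1
    case e'_4 => rfl
    case e'_5 => rfl
    case e'_6 => rfl
    case e'_8 => rfl
    have hcomm : NormedSpace.exp (s • Ω) * Ω = Ω * NormedSpace.exp (s • Ω) := by
      exact ((Commute.refl Ω).smul_left s).exp_left
    simp only [hf']
    rw [hcomm]
    noncomm_ring
  -- unitarity
  have hmem : ∀ s : ℝ, NormedSpace.exp (s • Ω) ∈ unitary (Matrix (Fin n) (Fin n) ℂ) := by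
    intro s
    apply exp_mem_unitary_of_skew
    rw [star_smul, star_trivial, hstar, smul_neg]
  have hmem' : ∀ s : ℝ, NormedSpace.exp (s • (-Ω)) ∈ unitary (Matrix (Fin n) (Fin n) ℂ) := by
    intro s
    apply exp_mem_unitary_of_skew
    rw [star_smul, star_trivial, star_neg, hstar, neg_neg, smul_neg, neg_neg]
  -- norm bound on derivative
  have hbound : ∀ s : ℝ, ‖f' s‖ ≤ ‖Ω * O - O * Ω‖ := by
    intro s
    have h : ‖f' s‖ = ‖O * Ω - Ω * O‖ := by
      simp only [hf']
      rw [CStarRing.norm_mul_mem_unitary _ (hmem s),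
        CStarRing.norm_mem_unitary_mul _ (hmem' s)]
    rw [h, norm_sub_rev]
  -- mean value inequality
  have key : ‖f 1 - f 0‖ ≤ ‖Ω * O - O * Ω‖ * (1 - 0) := by
    apply norm_image_sub_le_of_norm_deriv_le_segment'
      (fun x _ => (hderiv x).hasDerivWithinAt) (fun x _ => hbound x)
    exact Set.right_mem_Icc.mpr zero_le_one
  have hf0 : f 0 = O := by simp [hf, NormedSpace.exp_zero]
  have hf1 : f 1 = NormedSpace.exp (-Ω) * O * NormedSpace.exp Ω := by
    simp [hf]
  rw [hf0, hf1] at key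
  simpa using key
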